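/- Let A be an n×n real symmetric matrix with distinct eigenvalues λ₁,…,λ_m and spectral projections E₁,…,E_m, and let b ∈ ℝⁿ. Then for every real λ that is not an eigenvalue of A, the characteristic polynomial of the doubly bordered (n+2)×(n+2) matrix = [[A, b, e],[bᵀ, 0, 1],[eᵀ, 1, 0]] satisfies det(λI − Â) = det(λI − A) · det of the 2×2 matrix [[λ − Σᵢ bᵀEᵢb/(λ−λᵢ), −(1 + Σᵢ bᵀEᵢe/(λ−λᵢ))], [−(1 + Σᵢ bᵀEᵢe/(λ−λᵢ)), λ − Σᵢ eᵀEᵢe/(λ−λᵢ)]]. -/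

import Mathlib

open Matrix

noncomputable section

/-- The bordered matrix `[[A, b], [bᵀ, 0]]`. -/
def border {V : Type} [Fintype V] [DecidableEq V] (A : Matrix V V ℝ) (b : V → ℝ) :
    Matrix (V ⊕ Unit) (V ⊕ Unit) ℝ :=
  Matrix.fromBlocks A (Matrix.of fun i _ => b i) (Matrix.of fun _ j => b j) 0

/-- `E 1, …, E m` are the spectral projections of the real symmetric matrix `A` associated
with its distinct eigenvalues `lam 1, …, lam m`: they are symmetric idempotents, mutually
orthogonal, summing to the identity, with `A = ∑ i, lam i • E i`, the `lam i` pairwise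
distinct and each `E i` nonzero (so each `lam i` really is an eigenvalue). -/
structure SpectralDecomp {n m : ℕ} (A : Matrix (Fin n) (Fin n) ℝ) (lam : Fin m → ℝ)
    (E : Fin m → Matrix (Fin n) (Fin n) ℝ) : Prop where
  symm : ∀ i, (E i).IsSymm
  idem : ∀ i, E i * E i = E i
  mul_eq_zero : ∀ i j, i ≠ j → E i * E j = 0
  sum_eq_one : ∑ i, E i = 1
  eq_sum : A = ∑ i, lam i • E i
  injective : Function.Injective lam
  ne_zero : ∀ i, E i ≠ 0

lemma aux_sum_mulVec {k n : ℕ} (M : Fin k → Matrix (Fin n) (Fin n) ℝ) (v : Fin n → ℝ) :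
    (∑ i, M i) *ᵥ v = ∑ i, M i *ᵥ v := by
  ext j
  simp [Matrix.mulVec, dotProduct, Matrix.sum_apply, Finset.sum_mul]
  rw [Finset.sum_comm]

lemma aux_dot_sum {k n : ℕ} (u : Fin n → ℝ) (w : Fin k → Fin n → ℝ) :
    u ⬝ᵥ (∑ i, w i) = ∑ i, u ⬝ᵥ w i := by
  simp [dotProduct, Finset.sum_apply, Finset.mul_sum]
  rw [Finset.sum_comm]

/-- Eq. (6) in the proof of Proposition 5. For `x` not an eigenvalue of `A`,
the characteristic polynomial of the doubly bordered matrix `[[A,b,e],[bᵀ,0,1],[eᵀ,1,0]]`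
factors as `det(xI - A)` times an explicit `2 × 2` determinant. -/
theorem det_double_border_eq
    {n m : ℕ} (A : Matrix (Fin n) (Fin n) ℝ) (lam : Fin m → ℝ)
    (E : Fin m → Matrix (Fin n) (Fin n) ℝ) (b : Fin n → ℝ)
    (hA : A.IsSymm) (hE : SpectralDecomp A lam E)
    (x : ℝ) (hx : ∀ i, x ≠ lam i) :
    (x • (1 : Matrix ((Fin n ⊕ Unit) ⊕ Unit) ((Fin n ⊕ Unit) ⊕ Unit) ℝ)
        - border (border A b) fun _ => (1 : ℝ)).det
      = (x • (1 : Matrix (Fin n) (Fin n) ℝ) - A).det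
        * Matrix.det
            !![x - ∑ i, b ⬝ᵥ (E i *ᵥ b) / (x - lam i),
                 -(1 + ∑ i, b ⬝ᵥ (E i *ᵥ fun _ => (1 : ℝ)) / (x - lam i));
               -(1 + ∑ i, b ⬝ᵥ (E i *ᵥ fun _ => (1 : ℝ)) / (x - lam i)),
                 x - ∑ i, (fun _ => (1 : ℝ)) ⬝ᵥ (E i *ᵥ fun _ => (1 : ℝ)) / (x - lam i)] := by
  have hxl : ∀ i, x - lam i ≠ 0 := fun i => sub_ne_zero.mpr (hx i)
  set M : Matrix (Fin n) (Fin n) ℝ := x • (1 : Matrix (Fin n) (Fin n) ℝ) - A with hM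
  set N : Matrix (Fin n) (Fin n) ℝ := ∑ i, (x - lam i)⁻¹ • E i with hN
  have hMsum : M = ∑ i, (x - lam i) • E i := by
    rw [hM, hE.eq_sum]
    nth_rewrite 1 [← hE.sum_eq_one]
    rw [Finset.smul_sum, ← Finset.sum_sub_distrib]
    congr 1; ext i : 1
    rw [sub_smul]
  have key : ∀ (c d : Fin m → ℝ), (∀ i, c i * d i = 1) →
      (∑ i, c i • E i) * (∑ j, d j • E j) = 1 := by
    intro c d h
    rw [Finset.sum_mul]
    have h1 : ∀ i ∈ Finset.univ, (c i • E i) * (∑ j, d j • E j) = E i := by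
      intro i _
      rw [Finset.mul_sum, Finset.sum_eq_single i]
      · rw [Matrix.smul_mul, Matrix.mul_smul, smul_smul, hE.idem, h, one_smul]
      · intro j _ hj
        rw [Matrix.smul_mul, Matrix.mul_smul, smul_smul, hE.mul_eq_zero i j (Ne.symm hj),
          smul_zero]
      · intro hi; exact absurd (Finset.mem_univ i) hi
    rw [Finset.sum_congr rfl h1, hE.sum_eq_one]
  have hMN : M * N = 1 := by
    rw [hMsum, hN]; exact key _ _ fun i => mul_inv_cancel₀ (hxl i)
  have hNM : N * M = 1 := by
    rw [hMsum, hN]; exact key _ _ fun i => inv_mul_cancel₀ (hxl i)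
  haveI : Invertible M := invertibleOfLeftInverse M N hNM
  have hinvM : ⅟M = N := invOf_eq_right_inv hMN
  have hdot : ∀ u v : Fin n → ℝ, u ⬝ᵥ (N *ᵥ v) = ∑ i, u ⬝ᵥ (E i *ᵥ v) / (x - lam i) := by
    intro u v
    rw [hN, aux_sum_mulVec, aux_dot_sum]
    congr 1; ext i : 1
    rw [Matrix.smul_mulVec, dotProduct_smul, smul_eq_mul, div_eq_inv_mul]
  have hsym : ∀ (i : Fin m) (u v : Fin n → ℝ), u ⬝ᵥ (E i *ᵥ v) = v ⬝ᵥ (E i *ᵥ u) := by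
    intro i u v
    rw [Matrix.dotProduct_mulVec, dotProduct_comm]
    congr 1
    rw [← Matrix.mulVec_transpose, (hE.symm i).eq]
  -- blocks
  set e1 : Fin n → ℝ := fun _ => (1 : ℝ) with he1
  set B : Matrix (Fin n) (Unit ⊕ Unit) ℝ :=
    Matrix.of fun i j => Sum.elim (fun _ => -b i) (fun _ => (-1 : ℝ)) j with hB
  set C : Matrix (Unit ⊕ Unit) (Fin n) ℝ :=
    Matrix.of fun i j => Sum.elim (fun _ => -b j) (fun _ => (-1 : ℝ)) i with hC
  set D : Matrix (Unit ⊕ Unit) (Unit ⊕ Unit) ℝ :=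
    Matrix.of fun i j => if i = j then x else -1 with hD
  set σ : Fin n ⊕ (Unit ⊕ Unit) ≃ (Fin n ⊕ Unit) ⊕ Unit :=
    (Equiv.sumAssoc (Fin n) Unit Unit).symm with hσ
  have hsub : ((x • (1 : Matrix ((Fin n ⊕ Unit) ⊕ Unit) ((Fin n ⊕ Unit) ⊕ Unit) ℝ)
        - border (border A b) fun _ => (1 : ℝ)).submatrix σ σ) = Matrix.fromBlocks M B C D := by
    ext i j
    rcases i with i | (⟨⟩ | ⟨⟩) <;> rcases j with j | (⟨⟩ | ⟨⟩) <;>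
      simp [hσ, border, hM, hB, hC, hD, Matrix.one_apply, Matrix.fromBlocks, Matrix.submatrix,
        Equiv.sumAssoc]
  have hdet1 : (x • (1 : Matrix ((Fin n ⊕ Unit) ⊕ Unit) ((Fin n ⊕ Unit) ⊕ Unit) ℝ)
        - border (border A b) fun _ => (1 : ℝ)).det = (Matrix.fromBlocks M B C D).det := by
    rw [← hsub, Matrix.det_submatrix_equiv_self]
  rw [hdet1, Matrix.det_fromBlocks₁₁, hinvM]
  congr 1
  -- now the 2x2 determinant
  set ε : Unit ⊕ Unit ≃ Fin 2 :=
    ⟨Sum.elim (fun _ => 0) (fun _ => 1), ![Sum.inl (), Sum.inr ()],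
      by rintro (⟨⟩ | ⟨⟩) <;> rfl, by decide⟩ with hε
  set T : Matrix (Fin 2) (Fin 2) ℝ :=
    !![x - ∑ i, b ⬝ᵥ (E i *ᵥ b) / (x - lam i),
         -(1 + ∑ i, b ⬝ᵥ (E i *ᵥ fun _ => (1 : ℝ)) / (x - lam i));
       -(1 + ∑ i, b ⬝ᵥ (E i *ᵥ fun _ => (1 : ℝ)) / (x - lam i)),
         x - ∑ i, (fun _ => (1 : ℝ)) ⬝ᵥ (E i *ᵥ fun _ => (1 : ℝ)) / (x - lam i)] with hT
  have hCNB : ∀ (i j : Unit ⊕ Unit), (C * N * B) i j =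
      (Sum.elim (fun _ => b) (fun _ => e1) i) ⬝ᵥ (N *ᵥ (Sum.elim (fun _ => b) (fun _ => e1) j)) := by
    intro i j
    have : (C * N * B) i j = (fun k => C i k) ⬝ᵥ (N *ᵥ (fun k => B k j)) := by
      rw [Matrix.mul_assoc]
      simp [Matrix.mul_apply, Matrix.mulVec, dotProduct]
    rw [this]
    rcases i with ⟨⟩ | ⟨⟩ <;> rcases j with ⟨⟩ | ⟨⟩ <;>
      simp [hB, hC, he1, dotProduct, Matrix.mulVec, Finset.mul_sum, Finset.sum_mul] <;>
      ring_nf <;>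
      simp [mul_comm, neg_mul, mul_neg, Finset.sum_neg_distrib]
  have hsub2 : T.submatrix ε ε = D - C * N * B := by
    ext i j
    have := hCNB i j
    rcases i with ⟨⟩ | ⟨⟩ <;> rcases j with ⟨⟩ | ⟨⟩ <;>
      simp only [Matrix.submatrix_apply, Matrix.sub_apply, hD, Matrix.of_apply, hε, hT, this] <;>
      simp [hdot, he1, hsym (v := b), div_eq_mul_inv] <;> ring
  rw [← Matrix.det_submatrix_equiv_self ε T, hsub2]
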